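/- (Euler's theorem for the q-exponential e_q) For complex z, q with |q| < 1 and |z| < 1: ∑_{k=0}^∞ z^k / (q;q)_k = 1 / (z;q)_∞. -/

import Mathlib

open Finset Filter Topology

private lemma qexp_prod_one_sub_ge (s : Finset ℕ) (x : ℕ → ℝ) (h0 : ∀ i, 0 ≤ x i)
    (h1 : ∀ i, x i ≤ 1) : 1 - ∑ i ∈ s, x i ≤ ∏ i ∈ s, (1 - x i) := by
  induction s using Finset.cons_induction with
  | empty => simp
  | cons a s ha ih =>
    rw [Finset.prod_cons, Finset.sum_cons]
    have h2 : 0 ≤ ∏ i ∈ s, (1 - x i) := Finset.prod_nonneg fun i _ => by linarith [h1 i]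
    have h3 : 0 ≤ ∑ i ∈ s, x i := Finset.sum_nonneg fun i _ => h0 i
    nlinarith [h0 a, h1 a]

private lemma qexp_lb (q : ℂ) (hq : norm q < 1) :
    ∃ c : ℝ, 0 < c ∧ ∀ k : ℕ, c ≤ norm (∏ j ∈ Finset.range k, (1 - q * q ^ j)) := by
  have hr0 : 0 ≤ norm q := norm_nonneg q
  have hr1 : (0:ℝ) < (1 - norm q)/2 := by linarith
  obtain ⟨N, hN⟩ := exists_pow_lt_of_lt_one hr1 hq
  set r := norm q with hrdef
  set R : ℕ → ℝ := fun k => ∏ j ∈ Finset.range k, (1 - r ^ (j+1)) with hRdef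
  have hfac0 : ∀ j : ℕ, 0 < 1 - r ^ (j+1) := by
    intro j
    have : r ^ (j+1) < 1 := pow_lt_one₀ hr0 hq (Nat.succ_ne_zero j)
    linarith
  have hfac1 : ∀ j : ℕ, 1 - r ^ (j+1) ≤ 1 := by
    intro j
    have : 0 ≤ r ^ (j+1) := pow_nonneg hr0 _
    linarith
  have hRpos : ∀ k, 0 < R k := fun k => Finset.prod_pos fun j _ => hfac0 j
  refine ⟨R N / 2, by have := hRpos N; linarith, fun k => ?_⟩
  have key : R N / 2 ≤ R k := by
    rcases le_total k N with hkN | hNk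
    · have hsplit : R k * ∏ j ∈ Finset.Ico k N, (1 - r ^ (j+1)) = R N := by
        simp only [hRdef]
        rw [Finset.range_eq_Ico, Finset.range_eq_Ico]
        exact Finset.prod_Ico_consecutive _ (Nat.zero_le k) hkN
      have htail : ∏ j ∈ Finset.Ico k N, (1 - r ^ (j+1)) ≤ 1 :=
        Finset.prod_le_one (fun j _ => (hfac0 j).le) (fun j _ => hfac1 j)
      nlinarith [hRpos k, hRpos N]
    · have hsplit : R N * ∏ j ∈ Finset.Ico N k, (1 - r ^ (j+1)) = R k := by
        simp only [hRdef]
        rw [Finset.range_eq_Ico, Finset.range_eq_Ico]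
        exact Finset.prod_Ico_consecutive _ (Nat.zero_le N) hNk
      have hsum : ∑ j ∈ Finset.Ico N k, r ^ (j+1) ≤ 1/2 := by
        have h1 : ∑ j ∈ Finset.Ico N k, r ^ (j+1)
            = r ^ (N+1) * ∑ i ∈ Finset.range (k - N), r ^ i := by
          rw [Finset.sum_Ico_eq_sum_range, Finset.mul_sum]
          exact Finset.sum_congr rfl fun i _ => by ring
        have h2 : ∑ i ∈ Finset.range (k - N), r ^ i ≤ (1 - r)⁻¹ := by
          have := Summable.sum_le_tsum (Finset.range (k - N))
            (fun i _ => pow_nonneg hr0 i) (summable_geometric_of_lt_one hr0 hq)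
          rwa [tsum_geometric_of_lt_one hr0 hq] at this
        have h3 : r ^ (N+1) ≤ r ^ N := pow_le_pow_of_le_one hr0 hq.le (Nat.le_succ N)
        have h4 : (0:ℝ) < 1 - r := by linarith
        calc ∑ j ∈ Finset.Ico N k, r ^ (j+1) = r ^ (N+1) * ∑ i ∈ Finset.range (k - N), r ^ i := h1
          _ ≤ r ^ N * (1 - r)⁻¹ := by
              apply mul_le_mul h3 h2 (Finset.sum_nonneg fun i _ => pow_nonneg hr0 i)
                (pow_nonneg hr0 N)
          _ ≤ ((1 - r)/2) * (1 - r)⁻¹ := by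
              apply mul_le_mul_of_nonneg_right hN.le (by positivity)
          _ = 1/2 := by field_simp
      have htail : (1:ℝ)/2 ≤ ∏ j ∈ Finset.Ico N k, (1 - r ^ (j+1)) := by
        have := qexp_prod_one_sub_ge (Finset.Ico N k) (fun j => r ^ (j+1))
          (fun j => pow_nonneg hr0 _) (fun j => by linarith [hfac0 j])
        linarith
      nlinarith [hRpos N]
  have habs : R k ≤ norm (∏ j ∈ Finset.range k, (1 - q * q ^ j)) := by
    rw [norm_prod]
    apply Finset.prod_le_prod (fun j _ => (hfac0 j).le)
    intro j _
    have h1 : norm (q * q ^ j) = r ^ (j+1) := by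
      rw [norm_mul, norm_pow, hrdef, pow_succ]; ring
    have h2 := norm_sub_norm_le (1:ℂ) (q * q ^ j)
    rw [norm_one, h1] at h2
    exact h2
  exact le_trans key habs

private lemma qexp_summable (q : ℂ) (hq : norm q < 1) (w : ℂ)
    (hw : norm w < 1) :
    Summable (fun k : ℕ => w ^ k / ∏ j ∈ Finset.range k, (1 - q * q ^ j)) := by
  obtain ⟨c, hc, hcle⟩ := qexp_lb q hq
  refine Summable.of_norm (Summable.of_nonneg_of_le (fun k => norm_nonneg _) (fun k => ?_)
    ((summable_geometric_of_lt_one (norm_nonneg w) hw).mul_left c⁻¹))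
  rw [norm_div, norm_pow, div_eq_inv_mul]
  apply mul_le_mul_of_nonneg_right _ (pow_nonneg (norm_nonneg w) k)
  exact inv_anti₀ hc (hcle k)

private lemma qexp_facne (q : ℂ) (hq : norm q < 1) (k : ℕ) : (1 - q * q ^ k) ≠ 0 := by
  intro h
  rw [sub_eq_zero] at h
  have h1 : norm (q * q ^ k) < 1 := by
    rw [norm_mul, norm_pow]
    have h2 : norm q ^ k ≤ 1 := pow_le_one₀ (norm_nonneg q) hq.le
    nlinarith [norm_nonneg q, pow_nonneg (norm_nonneg q) k]
  rw [← h] at h1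
  simp at h1

private lemma qexp_feq (q : ℂ) (hq : norm q < 1) (w : ℂ) (hw : norm w < 1) :
    (∑' k : ℕ, w ^ k / ∏ j ∈ Finset.range k, (1 - q * q ^ j)) * (1 - w)
      = ∑' k : ℕ, (q * w) ^ k / ∏ j ∈ Finset.range k, (1 - q * q ^ j) := by
  have hqw : norm (q * w) < 1 := by
    rw [norm_mul]
    nlinarith [norm_nonneg q, norm_nonneg w]
  have hS := qexp_summable q hq w hw
  have hSq := qexp_summable q hq (q * w) hqw
  have hdiff : (∑' k : ℕ, (w ^ k / ∏ j ∈ Finset.range k, (1 - q * q ^ j)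
      - (q * w) ^ k / ∏ j ∈ Finset.range k, (1 - q * q ^ j)))
      = w * ∑' k : ℕ, w ^ k / ∏ j ∈ Finset.range k, (1 - q * q ^ j) := by
    rw [Summable.tsum_eq_zero_add (hS.sub hSq)]
    have h0 : w ^ 0 / ∏ j ∈ Finset.range 0, (1 - q * q ^ j)
        - (q * w) ^ 0 / ∏ j ∈ Finset.range 0, (1 - q * q ^ j) = 0 := by simp
    rw [h0, zero_add, ← tsum_mul_left]
    apply tsum_congr
    intro k
    rw [Finset.prod_range_succ, div_sub_div_same]
    have hnum : w ^ (k+1) - (q * w) ^ (k+1) = w ^ (k+1) * (1 - q * q ^ k) := by ring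
    rw [hnum, mul_div_mul_right _ _ (qexp_facne q hq k)]
    ring
  have hsplit := Summable.tsum_sub hS hSq
  rw [hsplit] at hdiff
  linear_combination hdiff

private lemma qexp_key (q z : ℂ) (hq : norm q < 1) (hz : norm z < 1) (N : ℕ) :
    (∑' k : ℕ, z ^ k / ∏ j ∈ Finset.range k, (1 - q * q ^ j))
      * ∏ n ∈ Finset.range N, (1 - z * q ^ n)
      = ∑' k : ℕ, (q ^ N * z) ^ k / ∏ j ∈ Finset.range k, (1 - q * q ^ j) := by
  induction N with
  | zero => simp
  | succ N ih =>
    have hwN : norm (q ^ N * z) < 1 := by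
      rw [norm_mul, norm_pow]
      calc norm q ^ N * norm z ≤ 1 * norm z := by
            apply mul_le_mul_of_nonneg_right (pow_le_one₀ (norm_nonneg q) hq.le)
              (norm_nonneg z)
        _ < 1 := by rwa [one_mul]
    have hfeq := qexp_feq q hq (q ^ N * z) hwN
    have e1 : (1 : ℂ) - z * q ^ N = 1 - q ^ N * z := by ring
    have e2 : q * (q ^ N * z) = q ^ (N+1) * z := by ring
    rw [Finset.prod_range_succ, ← mul_assoc, ih, e1]
    rw [← e2]
    exact hfeq

theorem q_exponential_e (z q : ℂ) (hq : ‖q‖ < 1) (hz : ‖z‖ < 1) :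
    (∑' k : ℕ, z ^ k / (∏ j ∈ Finset.range k, (1 - q * q ^ j))) =
      1 / ∏' n : ℕ, (1 - z * q ^ n) := by
  obtain ⟨c, hc, hcle⟩ := qexp_lb q hq
  have hq0 : 0 ≤ norm q := norm_nonneg q
  have hz0 : 0 ≤ norm z := norm_nonneg z
  -- factors are nonzero
  have habsn : ∀ n : ℕ, norm (z * q ^ n) < 1 := by
    intro n
    rw [norm_mul, norm_pow]
    calc norm z * norm q ^ n ≤ norm z * 1 := by
          apply mul_le_mul_of_nonneg_left (pow_le_one₀ hq0 hq.le) hz0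
      _ < 1 := by rwa [mul_one]
  have hfacne : ∀ n : ℕ, (1 - z * q ^ n) ≠ 0 := by
    intro n h
    rw [sub_eq_zero] at h
    have := habsn n
    rw [← h] at this
    simp at this
  -- summability of logs, hence HasProd
  have hlog : Summable (fun n : ℕ => Complex.log (1 - z * q ^ n)) := by
    set C : ℝ := ((1 - norm z)⁻¹ / 2 + 1) * norm z with hC
    apply Summable.of_norm_bounded
      ((summable_geometric_of_lt_one hq0 hq).mul_left C)
    intro n
    have ha : ‖-(z * q ^ n)‖ < 1 := by
      rw [norm_neg]; exact habsn n
    have h1 : (1 : ℂ) - z * q ^ n = 1 + -(z * q ^ n) := by ring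
    rw [h1]
    refine le_trans (Complex.norm_log_one_add_le ha) ?_
    rw [norm_neg]
    set a := norm (z * q ^ n) with hadef
    have ha1 : a ≤ norm z * norm q ^ n := by
      rw [hadef, norm_mul, norm_pow]
    have ha2 : a ≤ norm z := by
      calc a ≤ norm z * norm q ^ n := ha1
        _ ≤ norm z * 1 := mul_le_mul_of_nonneg_left (pow_le_one₀ hq0 hq.le) hz0
        _ = norm z := mul_one _
    have ha0 : 0 ≤ a := norm_nonneg _
    have ha3 : a < 1 := lt_of_le_of_lt ha2 hz
    have hzinv : (0:ℝ) ≤ (1 - norm z)⁻¹ := inv_nonneg.mpr (by linarith)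
    have hinv : (1 - a)⁻¹ ≤ (1 - norm z)⁻¹ := by
      apply inv_anti₀ (by linarith) (by linarith)
    have hsq : a ^ 2 ≤ a := by nlinarith
    have hstep : a ^ 2 * (1 - a)⁻¹ / 2 + a ≤ ((1 - norm z)⁻¹ / 2 + 1) * a := by
      have h5 : a ^ 2 * (1 - a)⁻¹ ≤ a * (1 - norm z)⁻¹ := by
        apply mul_le_mul hsq hinv (inv_nonneg.mpr (by linarith)) ha0
      nlinarith
    calc a ^ 2 * (1 - a)⁻¹ / 2 + a ≤ ((1 - norm z)⁻¹ / 2 + 1) * a := hstep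
      _ ≤ ((1 - norm z)⁻¹ / 2 + 1) * (norm z * norm q ^ n) := by
          apply mul_le_mul_of_nonneg_left (ha1.trans_eq rfl) (by linarith)
      _ = C * norm q ^ n := by rw [hC]; ring
  have hprod : HasProd (fun n : ℕ => 1 - z * q ^ n) (∏' n : ℕ, (1 - z * q ^ n)) :=
    (Complex.multipliable_of_summable_log hlog).hasProd
  have htend1 : Tendsto (fun N : ℕ => ∏ n ∈ Finset.range N, (1 - z * q ^ n)) atTop
      (𝓝 (∏' n : ℕ, (1 - z * q ^ n))) := hprod.tendsto_prod_nat
  -- S(q^N z) → 1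
  have htend2 : Tendsto
      (fun N : ℕ => ∑' k : ℕ, (q ^ N * z) ^ k / ∏ j ∈ Finset.range k, (1 - q * q ^ j))
      atTop (𝓝 1) := by
    rw [tendsto_iff_norm_sub_tendsto_zero]
    apply squeeze_zero (fun N => norm_nonneg _)
      (g := fun N => (c⁻¹ * norm z * (1 - norm z)⁻¹) * norm q ^ N)
    · intro N
      have hwN : norm (q ^ N * z) < 1 := by
        rw [norm_mul, norm_pow]
        calc norm q ^ N * norm z ≤ 1 * norm z := by
              apply mul_le_mul_of_nonneg_right (pow_le_one₀ hq0 hq.le) hz0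
          _ < 1 := by rwa [one_mul]
      set w := q ^ N * z with hwdef
      have hsum := qexp_summable q hq w hwN
      have hzero : ∑' k : ℕ, w ^ k / ∏ j ∈ Finset.range k, (1 - q * q ^ j)
          = 1 + ∑' k : ℕ, w ^ (k+1) / ∏ j ∈ Finset.range (k+1), (1 - q * q ^ j) := by
        rw [Summable.tsum_eq_zero_add hsum]
        simp
      have hwabs : norm w = norm q ^ N * norm z := by
        rw [hwdef, norm_mul, norm_pow]
      have hwle : norm w ≤ norm z := by
        rw [hwabs]
        calc norm q ^ N * norm z ≤ 1 * norm z :=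
              mul_le_mul_of_nonneg_right (pow_le_one₀ hq0 hq.le) hz0
          _ = norm z := one_mul _
      have hbound : ∀ k : ℕ,
          ‖w ^ (k+1) / ∏ j ∈ Finset.range (k+1), (1 - q * q ^ j)‖
            ≤ c⁻¹ * (norm q ^ N * norm z) * norm z ^ k := by
        intro k
        rw [norm_div, norm_pow]
        have hnum : norm w ^ (k+1)
            ≤ (norm q ^ N * norm z) * norm z ^ k := by
          rw [pow_succ']
          rw [← hwabs]
          apply mul_le_mul_of_nonneg_left (pow_le_pow_left₀ (norm_nonneg w) hwle k)
            (norm_nonneg w)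
        calc norm w ^ (k+1) / norm (∏ j ∈ Finset.range (k+1), (1 - q * q ^ j))
            ≤ ((norm q ^ N * norm z) * norm z ^ k) / c := by
              apply div_le_div₀ (by positivity) hnum hc (hcle (k+1))
          _ = c⁻¹ * (norm q ^ N * norm z) * norm z ^ k := by ring
      have hgsum : HasSum (fun k : ℕ => c⁻¹ * (norm q ^ N * norm z)
          * norm z ^ k)
          (c⁻¹ * (norm q ^ N * norm z) * (1 - norm z)⁻¹) := by
        have := (hasSum_geometric_of_lt_one hz0 hz).mul_left
          (c⁻¹ * (norm q ^ N * norm z))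
        simpa using this
      have := tsum_of_norm_bounded hgsum hbound
      calc ‖(∑' k : ℕ, w ^ k / ∏ j ∈ Finset.range k, (1 - q * q ^ j)) - 1‖
          = ‖∑' k : ℕ, w ^ (k+1) / ∏ j ∈ Finset.range (k+1), (1 - q * q ^ j)‖ := by
            rw [hzero]; congr 1; ring
        _ ≤ c⁻¹ * (norm q ^ N * norm z) * (1 - norm z)⁻¹ := this
        _ = (c⁻¹ * norm z * (1 - norm z)⁻¹) * norm q ^ N := by ring
    · have := (tendsto_pow_atTop_nhds_zero_of_lt_one hq0 hq).const_mul
        (c⁻¹ * norm z * (1 - norm z)⁻¹)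
      simpa using this
  have hkey2 : Tendsto (fun N : ℕ =>
      (∑' k : ℕ, z ^ k / ∏ j ∈ Finset.range k, (1 - q * q ^ j))
        * ∏ n ∈ Finset.range N, (1 - z * q ^ n)) atTop (𝓝 1) :=
    htend2.congr (fun N => (qexp_key q z hq hz N).symm)
  have h1 : (∑' k : ℕ, z ^ k / ∏ j ∈ Finset.range k, (1 - q * q ^ j))
      * (∏' n : ℕ, (1 - z * q ^ n)) = 1 :=
    tendsto_nhds_unique (htend1.const_mul _) hkey2
  have hP : (∏' n : ℕ, (1 - z * q ^ n)) ≠ 0 := by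
    intro h
    rw [h, mul_zero] at h1
    exact one_ne_zero h1.symm
  rw [eq_div_iff hP]
  exact h1
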